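/- arXiv:2105.09631 — 2 statements merged into one kernel-verified Lean document; each statement's English description precedes it below -/
import Mathlib

section
/- For all w₁, w₂ ∈ 𝔥 one has w₁e₁ ⊛̃ w₂e₁ = (w₁ * w₂)e₁, where e₁ = -y and * is the usual harmonic (stuffle) product. -/
open scoped BigOperators

abbrev Ltr := Fin 2

/-- `𝔥 = ℚ⟨x,y⟩`, realized as the monoid algebra of the free monoid on two letters. -/
abbrev H := MonoidAlgebra ℚ (FreeMonoid Ltr)

/-- The word `u₁⋯u_m` as an element of `𝔥`. -/
noncomputable def wrd (l : List Ltr) : H := MonoidAlgebra.of ℚ (FreeMonoid Ltr) (FreeMonoid.ofList l)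

/-- The generator `x`. -/
noncomputable def Xh : H := wrd [0]
/-- The generator `y`. -/
noncomputable def Yh : H := wrd [1]

/-- `e₀ = x`, `e₁ = -y`. -/
noncomputable def eH (a : Ltr) : H := if a = 0 then Xh else -Yh

/-- The product `e_{a₁}⋯e_{a_m} ∈ 𝔥` for an `e`-word. -/
noncomputable def ew (l : List Ltr) : H := ((-1 : ℚ) ^ (l.count 1)) • wrd l

/-- The symmetric harmonic product on basis `e`-words:
`e_a ⊛̃ e_{b₁}⋯e_{bₙ} = e_{b₁}⋯e_{bₙ} ⊛̃ e_a = e_{ab₁}⋯e_{abₙ}` and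
`e_a w₁ ⊛̃ e_b w₂ = e_{ab}(w₁ ⊛̃ e_b w₂) + e_{ab}(e_a w₁ ⊛̃ w₂) - e_{ab}e₀(w₁ ⊛̃ w₂)`. -/
noncomputable def mstE : List Ltr → List Ltr → H
  | [a], b :: bs => ew ((b :: bs).map (fun c => a * c))
  | a :: a' :: as, [b] => ew ((a :: a' :: as).map (fun c => c * b))
  | a :: a' :: as, b :: b' :: bs =>
      eH (a * b) * mstE (a' :: as) (b :: b' :: bs)
      + eH (a * b) * mstE (a :: a' :: as) (b' :: bs)
      - eH (a * b) * Xh * mstE (a' :: as) (b' :: bs)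
  | _, _ => 0
termination_by l₁ l₂ => l₁.length + l₂.length

/-- The symmetric harmonic product `⊛̃ : 𝔥' ⊗ 𝔥' → 𝔥'`, extended bilinearly
(using that the word `u₁⋯u_m` equals `(-1)^{#{i : uᵢ = y}} e_{u₁}⋯e_{u_m}`). -/
noncomputable def mst (f g : H) : H :=
  f.coeff.sum fun u cu => g.coeff.sum fun v cv =>
    (cu * cv * (-1 : ℚ) ^ ((FreeMonoid.toList u).count 1)
      * (-1 : ℚ) ^ ((FreeMonoid.toList v).count 1)) •
      mstE (FreeMonoid.toList u) (FreeMonoid.toList v)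

/-- Letter produced when stuffling letters `u, v`: `y` iff both are `y`, else `x`. -/
noncomputable def ellt (a b : Ltr) : H := if a = 1 ∧ b = 1 then Yh else Xh
def cc1 (a b : Ltr) : ℚ := if a = 1 ∧ b = 0 then -1 else 1
def cc2 (a b : Ltr) : ℚ := if a = 0 ∧ b = 1 then -1 else 1
def cc3 (a b : Ltr) : ℚ := if a = 0 ∧ b = 0 then -1 else 1

/-- The harmonic (stuffle) product on words of `𝔥`: on `𝔥¹` it is Hoffman's harmonic
product defined by `w*1 = 1*w = w` and
`z_k w₁ * z_l w₂ = z_k(w₁ * z_l w₂) + z_l(z_k w₁ * w₂) + z_{k+l}(w₁ * w₂)` with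
`z_n = yx^{n-1}`, extended to all of `𝔥` (compatibly, via `w₁e₁ ⊛̃ w₂e₁ = (w₁*w₂)e₁`). -/
noncomputable def starW : List Ltr → List Ltr → H
  | [], v => wrd v
  | u, [] => wrd u
  | a :: u, b :: v =>
      cc1 a b • (ellt a b * starW u (b :: v)) + cc2 a b • (ellt a b * starW (a :: u) v)
      + cc3 a b • (ellt a b * Xh * starW u v)
termination_by u v => u.length + v.length

/-- The harmonic product `*` on `𝔥`, extended bilinearly. -/
noncomputable def star (f g : H) : H :=
  f.coeff.sum fun u cu => g.coeff.sum fun v cv => (cu * cv) • starW u.toList v.toList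

-- exploratory lemmas
lemma wrd_append (l₁ l₂ : List Ltr) : wrd (l₁ ++ l₂) = wrd l₁ * wrd l₂ := by simp [wrd]
lemma wrd_nil : wrd ([] : List Ltr) = 1 := by simp [wrd, MonoidAlgebra.one_def]

lemma mstE_one_cons (b : Ltr) (bs : List Ltr) :
    mstE [1] (b :: bs) = ew (b :: bs) := by
  rw [mstE]
  congr 1
  simp

lemma mstE_cons_one (a a' : Ltr) (as : List Ltr) :
    mstE (a :: a' :: as) [1] = ew (a :: a' :: as) := by
  rw [mstE]
  congr 1
  simp

lemma mstE_cons_cons (a b c d : Ltr) (cs ds : List Ltr) :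
    mstE (a :: c :: cs) (b :: d :: ds) =
      eH (a*b) * mstE (c :: cs) (b :: d :: ds)
      + eH (a*b) * mstE (a :: c :: cs) (d :: ds)
      - eH (a*b) * Xh * mstE (c :: cs) (d :: ds) := by
  rw [mstE]

lemma starW_nil_left (v : List Ltr) : starW [] v = wrd v := by rw [starW]
lemma starW_nil_right (a : Ltr) (u : List Ltr) : starW (a :: u) [] = wrd (a :: u) := by rw [starW]; simp
lemma starW_cons_cons (a b : Ltr) (u v : List Ltr) :
    starW (a :: u) (b :: v) =
      cc1 a b • (ellt a b * starW u (b :: v)) + cc2 a b • (ellt a b * starW (a :: u) v)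
      + cc3 a b • (ellt a b * Xh * starW u v) := by
  rw [starW]

lemma sq1 (n : ℕ) : ((-1:ℚ)^n) * ((-1:ℚ)^n) = 1 := by
  rw [← pow_add]; exact Even.neg_one_pow ⟨n, rfl⟩

lemma mstE_one_cons' (b : Ltr) (v : List Ltr) :
    mstE [1] ((b :: v) ++ [1]) = ew ((b :: v) ++ [1]) := by
  simp only [List.cons_append]
  exact mstE_one_cons b (v ++ [1])

lemma mstE_cons_one' (a : Ltr) (u : List Ltr) :
    mstE ((a :: u) ++ [1]) [1] = ew ((a :: u) ++ [1]) := by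
  cases u with
  | nil => exact mstE_cons_one a 1 []
  | cons c cs => exact mstE_cons_one a c (cs ++ [1])

lemma mstE_cc (a b : Ltr) (u v : List Ltr) :
    mstE ((a :: u) ++ [1]) ((b :: v) ++ [1]) =
      eH (a*b) * mstE (u ++ [1]) ((b::v) ++ [1])
      + eH (a*b) * mstE ((a::u) ++ [1]) (v ++ [1])
      - eH (a*b) * Xh * mstE (u ++ [1]) (v ++ [1]) := by
  cases u <;> cases v <;> simp only [List.cons_append, List.nil_append] <;>
    exact mstE_cons_cons ..

lemma keyE : ∀ (u v : List Ltr),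
    ((-1:ℚ)^(u.count 1) * (-1:ℚ)^(v.count 1)) • mstE (u ++ [1]) (v ++ [1])
      = starW u v * (-Yh)
  | [], [] => by
      simp only [List.nil_append]
      rw [mstE_one_cons, starW_nil_left, wrd_nil]
      simp [ew, Yh]
  | [], b :: v => by
      simp only [List.nil_append]
      rw [mstE_one_cons', starW_nil_left, ew, smul_smul]
      have hc : (((b :: v) ++ [1]).count 1) = (b::v).count 1 + 1 := by
        simp [List.count_append, List.count_cons]; omega
      rw [hc, pow_succ]
      have : ((-1:ℚ)^(([]:List Ltr).count 1) * (-1)^((b::v).count 1))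
          * ((-1:ℚ)^((b::v).count 1) * -1) = -1 := by
        simp only [List.count_nil, pow_zero, one_mul, ← mul_assoc]
        rw [sq1]; ring
      rw [this, Yh, mul_neg, ← wrd_append]
      simp
  | a :: u, [] => by
      simp only [List.nil_append]
      rw [mstE_cons_one', starW_nil_right, ew, smul_smul]
      have hc : (((a :: u) ++ [1]).count 1) = (a::u).count 1 + 1 := by
        simp [List.count_append, List.count_cons]; omega
      rw [hc, pow_succ]
      have : ((-1:ℚ)^((a::u).count 1) * (-1)^(([]:List Ltr).count 1))
          * ((-1:ℚ)^((a::u).count 1) * -1) = -1 := by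
        simp only [List.count_nil, pow_zero, mul_one, ← mul_assoc]
        rw [sq1]; ring
      rw [this, Yh, mul_neg, ← wrd_append]
      simp
  | a :: u, b :: v => by
      have h1 := keyE u (b :: v)
      have h2 := keyE (a :: u) v
      have h3 := keyE u v
      rw [mstE_cc, starW_cons_cons]
      simp only [add_mul, smul_mul_assoc, mul_assoc]
      rw [← h1, ← h2, ← h3]
      fin_cases a <;> fin_cases b <;>
        simp only [eH, ellt, cc1, cc2, cc3, List.count_cons, mul_smul_comm, smul_smul,
          if_true, if_false, Fin.isValue] <;>
        norm_num <;>
        module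

lemma mst_single_single (p q : FreeMonoid Ltr) (c d : ℚ) :
    mst (MonoidAlgebra.single p c) (MonoidAlgebra.single q d)
      = (c * d * (-1:ℚ)^((FreeMonoid.toList p).count 1)
          * (-1:ℚ)^((FreeMonoid.toList q).count 1)) • mstE p.toList q.toList := by
  unfold mst
  simp only [MonoidAlgebra.coeff_single]
  rw [Finsupp.sum_single_index (by simp), Finsupp.sum_single_index (by simp)]

lemma star_single_single (p q : FreeMonoid Ltr) (c d : ℚ) :
    _root_.star (MonoidAlgebra.single p c) (MonoidAlgebra.single q d)
      = (c * d) • starW p.toList q.toList := by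
  unfold _root_.star
  simp only [MonoidAlgebra.coeff_single]
  rw [Finsupp.sum_single_index (by simp), Finsupp.sum_single_index (by simp)]

lemma mst_zero_left (g : H) : mst 0 g = 0 := by simp [mst]
lemma star_zero_left (g : H) : _root_.star 0 g = 0 := by simp [_root_.star]
lemma mst_zero_right (f : H) : mst f 0 = 0 := by simp [mst]
lemma star_zero_right (f : H) : _root_.star f 0 = 0 := by simp [_root_.star]

lemma mst_add_left (f f' g : H) : mst (f + f') g = mst f g + mst f' g := by
  unfold mst
  rw [MonoidAlgebra.coeff_add]
  rw [Finsupp.sum_add_index']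
  · intro u; simp
  · intro u b₁ b₂; rw [← Finsupp.sum_add]; congr 1; funext v cv; rw [← add_smul]; ring_nf

lemma mst_add_right (f g g' : H) : mst f (g + g') = mst f g + mst f g' := by
  unfold mst
  rw [← Finsupp.sum_add]
  apply Finsupp.sum_congr
  intro u _
  rw [MonoidAlgebra.coeff_add]
  rw [Finsupp.sum_add_index']
  · intro v; simp
  · intro v b₁ b₂; rw [← add_smul]; ring_nf

lemma star_add_left (f f' g : H) : _root_.star (f + f') g = _root_.star f g + _root_.star f' g := by
  unfold _root_.star
  rw [MonoidAlgebra.coeff_add]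
  rw [Finsupp.sum_add_index']
  · intro u; simp
  · intro u b₁ b₂; rw [← Finsupp.sum_add]; congr 1; funext v cv; rw [← add_smul]; ring_nf

lemma star_add_right (f g g' : H) : _root_.star f (g + g') = _root_.star f g + _root_.star f g' := by
  unfold _root_.star
  rw [← Finsupp.sum_add]
  apply Finsupp.sum_congr
  intro u _
  rw [MonoidAlgebra.coeff_add]
  rw [Finsupp.sum_add_index']
  · intro v; simp
  · intro v b₁ b₂; rw [← add_smul]; ring_nf

lemma hy_lem : (-Yh : H) = MonoidAlgebra.single (FreeMonoid.ofList [1]) (-1 : ℚ) := by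
  simp [Yh, wrd, MonoidAlgebra.of_apply]

lemma hmul_lem (r : FreeMonoid Ltr) (e : ℚ) (x y : H) (hx : x = MonoidAlgebra.single r e)
    (hyy : y = MonoidAlgebra.single (FreeMonoid.ofList [1]) (-1:ℚ)) :
    x * y = MonoidAlgebra.single (r * FreeMonoid.ofList [1]) (-e) := by
  subst hx hyy
  have h : (MonoidAlgebra.single r e : H) * MonoidAlgebra.single (FreeMonoid.ofList [1]) (-1:ℚ)
      = MonoidAlgebra.single (r * FreeMonoid.ofList [1]) (e * -1) :=
    MonoidAlgebra.single_mul_single ..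
  rw [mul_neg_one] at h
  exact h


/-- For all `w₁, w₂ ∈ 𝔥`, `w₁e₁ ⊛̃ w₂e₁ = (w₁ * w₂)e₁` with `e₁ = -y`. -/
theorem stmt5 (w₁ w₂ : H) :
    mst (w₁ * (-Yh)) (w₂ * (-Yh)) = star w₁ w₂ * (-Yh) := by
  induction w₁ using MonoidAlgebra.induction_linear with
  | zero => simp [mst_zero_left, star_zero_left, zero_mul]
  | add f f' hf hf' =>
      rw [add_mul, mst_add_left, star_add_left, add_mul, hf, hf']
  | single p c =>
      induction w₂ using MonoidAlgebra.induction_linear with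
      | zero => simp [mst_zero_right, star_zero_right, zero_mul]
      | add g g' hg hg' =>
          rw [add_mul, mst_add_right, star_add_right, add_mul, hg, hg']
      | single q d =>
          rw [hmul_lem p c _ _ rfl hy_lem, hmul_lem q d _ _ rfl hy_lem,
            mst_single_single, star_single_single]
          have hpl : FreeMonoid.toList (p * FreeMonoid.ofList [1]) = p.toList ++ [1] := rfl
          have hql : FreeMonoid.toList (q * FreeMonoid.ofList [1]) = q.toList ++ [1] := rfl
          rw [hpl, hql, smul_mul_assoc, ← keyE p.toList q.toList]
          simp only [List.count_append, List.count_cons, List.count_nil, smul_smul]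
          norm_num [pow_succ]
          module
end

section
/- For every n ≥ 0 and w ∈ 𝔥, one has Σ_{j=0}^{n} f_j(y x^{n-j} w) = y f_n(w). -/
open scoped BigOperators

/-- `dn n w = yⁿ ⋄ w` where `⋄` is the bilinear map with `1⋄w = w⋄1 = w`,
`yw₁ ⋄ yw₂ = y(yw₁ ⋄ w₂) - y(w₁ ⋄ xw₂)` and `yw₁ ⋄ xw₂ = x(yw₁ ⋄ w₂) + y(w₁ ⋄ xw₂)`. -/
noncomputable def dn : ℕ → List Ltr → H
  | 0, u => wrd u
  | n + 1, [] => wrd (List.replicate (n + 1) 1)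
  | n + 1, a :: u =>
      if a = 0 then Xh * dn (n + 1) u + Yh * dn n (a :: u)
      else Yh * dn (n + 1) u - Yh * dn n ((0 : Ltr) :: u)
termination_by n u => (n, u.length)

/-- `dia n f = yⁿ ⋄ f`, extended linearly. -/
noncomputable def dia (n : ℕ) (f : H) : H := f.coeff.sum fun u c => c • dn n u.toList

/-- `f_n : 𝔥 → 𝔥` for `n ∈ ℤ`: `f_n = 0` for `n < 0`, `f₀ = id`, and
`f_n(w) = yⁿ ⋄ w - (y^{n-1} ⋄ w)y` for `n ≥ 1`. -/
noncomputable def fZ (n : ℤ) (f : H) : H :=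
  if n < 0 then 0 else if n = 0 then f else dia n.toNat f - dia (n.toNat - 1) f * Yh

lemma dia_single (n : ℕ) (u : FreeMonoid Ltr) (c : ℚ) :
    dia n (MonoidAlgebra.single u c) = c • dn n u.toList := by
  unfold dia
  rw [MonoidAlgebra.coeff_single]
  exact Finsupp.sum_single_index (zero_smul _ _)

lemma dia_zero' (n : ℕ) : dia n (0 : H) = 0 := by
  unfold dia; rw [MonoidAlgebra.coeff_zero]; exact Finsupp.sum_zero_index

lemma dia_add (n : ℕ) (f g : H) : dia n (f + g) = dia n f + dia n g := by
  unfold dia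
  rw [MonoidAlgebra.coeff_add]
  exact Finsupp.sum_add_index' (fun _ => zero_smul _ _) (fun _ _ _ => add_smul _ _ _)

lemma Xh_single (u : FreeMonoid Ltr) (c : ℚ) :
    Xh * MonoidAlgebra.single u c = MonoidAlgebra.single (FreeMonoid.ofList (0 :: u.toList)) c := by
  rw [Xh, wrd, MonoidAlgebra.of_apply, MonoidAlgebra.single_mul_single, one_mul]
  rfl

lemma Yh_single (u : FreeMonoid Ltr) (c : ℚ) :
    Yh * MonoidAlgebra.single u c = MonoidAlgebra.single (FreeMonoid.ofList (1 :: u.toList)) c := by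
  rw [Yh, wrd, MonoidAlgebra.of_apply, MonoidAlgebra.single_mul_single, one_mul]
  rfl

lemma dia_zero (f : H) : dia 0 f = f := by
  induction f using MonoidAlgebra.induction_linear with
  | zero => exact dia_zero' 0
  | add f g hf hg => rw [dia_add, hf, hg]
  | single u c =>
      rw [dia_single]
      show c • dn 0 u.toList = MonoidAlgebra.single u c
      rw [dn, wrd, MonoidAlgebra.of_apply]
      simp [MonoidAlgebra.smul_single']

lemma dn_cons0 (n : ℕ) (l : List Ltr) :
    dn (n + 1) ((0 : Ltr) :: l) = Xh * dn (n + 1) l + Yh * dn n ((0 : Ltr) :: l) := by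
  rw [dn]; simp

lemma dn_cons1 (n : ℕ) (l : List Ltr) :
    dn (n + 1) ((1 : Ltr) :: l) = Yh * dn (n + 1) l - Yh * dn n ((0 : Ltr) :: l) := by
  rw [dn]
  norm_num

lemma dia_Y (n : ℕ) (f : H) :
    dia (n + 1) (Yh * f) = Yh * dia (n + 1) f - Yh * dia n (Xh * f) := by
  induction f using MonoidAlgebra.induction_linear with
  | zero => simp [dia_zero']
  | add f g hf hg =>
      rw [mul_add, dia_add, dia_add, mul_add (Xh), dia_add, mul_add, mul_add, hf, hg]
      abel
  | single u c =>
      rw [Yh_single, Xh_single, dia_single, dia_single, dia_single,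
        FreeMonoid.toList_ofList, FreeMonoid.toList_ofList, dn_cons1,
        mul_smul_comm, mul_smul_comm, smul_sub]

lemma fZ_zero' (f : H) : fZ (0 : ℤ) f = f := by simp [fZ]

lemma fZ_succ (m : ℕ) (f : H) :
    fZ ((m + 1 : ℕ) : ℤ) f = dia (m + 1) f - dia m f * Yh := by
  have h1 : ¬((m : ℤ) + 1 < 0) := by omega
  have h2 : ¬((m : ℤ) + 1 = 0) := by omega
  simp [fZ, h1, h2]

lemma key (m : ℕ) (w : H) :
    Yh * fZ (m : ℤ) (Xh * w) + fZ ((m + 1 : ℕ) : ℤ) (Yh * w) = Yh * fZ ((m + 1 : ℕ) : ℤ) w := by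
  cases m with
  | zero =>
      rw [Nat.cast_zero, fZ_zero', fZ_succ 0, fZ_succ 0, dia_Y 0, dia_zero (Yh * w), dia_zero (Xh * w), dia_zero w]
      noncomm_ring
  | succ m =>
      rw [fZ_succ, fZ_succ, fZ_succ, dia_Y (m + 1), dia_Y m]
      noncomm_ring


/-- For `n ≥ 0` and `w ∈ 𝔥`: `Σ_{j=0}^{n} f_j(y x^{n-j} w) = y f_n(w)`. -/
theorem stmt8 (n : ℕ) (w : H) :
    ∑ j ∈ Finset.range (n + 1), fZ (j : ℤ) (Yh * Xh ^ (n - j) * w) = Yh * fZ (n : ℤ) w := by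
  induction n generalizing w with
  | zero => simp [fZ_zero']
  | succ n ih =>
      rw [Finset.sum_range_succ]
      have hcongr : ∀ j ∈ Finset.range (n + 1),
          fZ (j : ℤ) (Yh * Xh ^ (n + 1 - j) * w) = fZ (j : ℤ) (Yh * Xh ^ (n - j) * (Xh * w)) := by
        intro j hj
        rw [Finset.mem_range] at hj
        have h1 : n + 1 - j = (n - j) + 1 := by omega
        rw [h1, pow_succ, ← mul_assoc, mul_assoc]
      rw [Finset.sum_congr rfl hcongr, ih (Xh * w)]
      have h2 : n + 1 - (n + 1) = 0 := by omega
      rw [h2, pow_zero, mul_one]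
      exact key n w
end
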